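/- Let φ: A* → Σ* be a literal (letter-to-letter) surjective monoid morphism between free monoids on finite alphabets with |A| ≥ |Σ| ≥ 2. Then the algebra homomorphisms φ∘l*_A and l*_Σ∘φ from K⟨A⟩ to K⟨Σ⟩ coincide; in particular φ(ker l*_A) ⊆ ker l*_Σ. -/

import Mathlib

open MonoidAlgebra

/-- The word `w` viewed as a monomial in the free associative algebra `K⟨A⟩`. -/
noncomputable def word (K : Type*) [CommRing K] {A : Type*} (w : List A) :
    MonoidAlgebra K (FreeMonoid A) :=
  MonoidAlgebra.single (FreeMonoid.ofList w) 1

/-- The adjoint `l*` of the left-normed Lie bracketing, defined by the recursion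
`l*(ε) = 0`, `l*(a) = a`, `l*(aub) = l*(au)·b − l*(ub)·a`. -/
noncomputable def lstar (K : Type*) [CommRing K] {A : Type*} :
    List A → MonoidAlgebra K (FreeMonoid A)
  | [] => 0
  | [a] => word K [a]
  | a :: b :: r =>
      lstar K (a :: (b :: r).dropLast) * word K [(b :: r).getLast (by simp)]
        - lstar K (b :: r) * word K [a]
  termination_by w => w.length
  decreasing_by
    · simp [List.length_dropLast]
    · simp

noncomputable def Phi (K : Type*) [CommRing K] {A B : Type*} (φ : A → B) :
    MonoidAlgebra K (FreeMonoid A) →+* MonoidAlgebra K (FreeMonoid B) :=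
  MonoidAlgebra.mapDomainRingHom K (FreeMonoid.map φ)

lemma Phi_apply {K : Type*} [CommRing K] {A B : Type*} (φ : A → B)
    (x : MonoidAlgebra K (FreeMonoid A)) :
    Phi K φ x = MonoidAlgebra.mapDomain (fun u => FreeMonoid.map φ u) x := rfl

lemma Phi_word {K : Type*} [CommRing K] {A B : Type*} (φ : A → B) (w : List A) :
    Phi K φ (word K w) = word K (w.map φ) := by
  simp only [Phi_apply, word, MonoidAlgebra.mapDomain_single]
  congr 1

lemma lstar_map {K : Type*} [CommRing K] {A B : Type*} (φ : A → B) :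
    ∀ (w : List A), Phi K φ (lstar K w) = lstar K (w.map φ)
  | [] => by simp [lstar]
  | [a] => by
      rw [lstar, Phi_word]
      simp [lstar]
  | a :: b :: r => by
      rw [lstar, map_sub, map_mul, map_mul,
        lstar_map φ (a :: (b :: r).dropLast), lstar_map φ (b :: r),
        Phi_word, Phi_word]
      rw [show List.map φ (a :: b :: r) = φ a :: φ b :: List.map φ r from rfl, lstar]
      have hd : (φ a :: (φ b :: List.map φ r).dropLast)
          = List.map φ (a :: (b :: r).dropLast) := by
        have h := (List.map_dropLast (f := φ) (l := b :: r)).symm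
        simp only [List.map_cons] at h
        rw [h]
        simp
      have hg : [(φ b :: List.map φ r).getLast (by simp)]
          = List.map φ [(b :: r).getLast (by simp)] := by
        have := List.getLast_map (l := b :: r) (f := φ) (by simp)
        simp only [List.map_cons] at this
        simp [this]
      rw [hd, hg]
      rfl
  termination_by w => w.length
  decreasing_by
    · simp [List.length_dropLast]
    · simp

/-- The linear extension of `l*` to the whole of `K⟨A⟩`. -/
noncomputable def lstarExt (K : Type*) [CommRing K] {A : Type*}
    (P : MonoidAlgebra K (FreeMonoid A)) : MonoidAlgebra K (FreeMonoid A) :=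
  P.coeff.sum fun w c => c • lstar K (FreeMonoid.toList w)

/-- for a literal surjective morphism `φ : A* → Σ*` (with `|A| ≥ |Σ| ≥ 2`),
the algebra maps `φ ∘ l*_A` and `l*_Σ ∘ φ` from `K⟨A⟩` to `K⟨Σ⟩` coincide; in particular
`φ(ker l*_A) ⊆ ker l*_Σ`. -/
theorem literal_morphism_comm_lstar {K : Type*} [CommRing K] {A B : Type*}
    [Fintype A] [Fintype B] (φ : A → B) (hφ : Function.Surjective φ)
    (hB : ∃ b₁ b₂ : B, b₁ ≠ b₂) :
    (∀ P : MonoidAlgebra K (FreeMonoid A),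
        MonoidAlgebra.mapDomain (fun x => FreeMonoid.map φ x) (lstarExt K P) =
          lstarExt K (MonoidAlgebra.mapDomain (fun x => FreeMonoid.map φ x) P)) ∧
    (∀ P : MonoidAlgebra K (FreeMonoid A), lstarExt K P = 0 →
        lstarExt K (MonoidAlgebra.mapDomain (fun x => FreeMonoid.map φ x) P) = 0) := by
  have main : ∀ P : MonoidAlgebra K (FreeMonoid A),
      MonoidAlgebra.mapDomain (fun x => FreeMonoid.map φ x) (lstarExt K P) =
        lstarExt K (MonoidAlgebra.mapDomain (fun x => FreeMonoid.map φ x) P) := by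
    intro P
    have L : MonoidAlgebra.mapDomain (fun x => FreeMonoid.map φ x) (lstarExt K P)
        = P.coeff.sum fun w c => c • lstar K ((FreeMonoid.toList w).map φ) := by
      rw [lstarExt, ← Phi_apply, map_finsuppSum]
      refine Finsupp.sum_congr ?_
      intro w _
      rw [Phi_apply, MonoidAlgebra.mapDomain_smul, ← Phi_apply, lstar_map]
    have R : lstarExt K (MonoidAlgebra.mapDomain (fun x => FreeMonoid.map φ x) P)
        = P.coeff.sum fun w c => c • lstar K ((FreeMonoid.toList w).map φ) := by
      rw [lstarExt, MonoidAlgebra.mapDomain, MonoidAlgebra.coeff_ofCoeff, Finsupp.sum_mapDomain_index]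
      · refine Finsupp.sum_congr ?_
        intro w _
        rfl
      · intro w
        simp
      · intro w c d
        rw [add_smul]
    rw [L, R]
  refine ⟨main, fun P h => ?_⟩
  rw [← main P, h]
  simp
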